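/- Let T be a rooted tree in which every internal node has at most two non-leaf children (a bifurcatable tree). Let T' be the strictly bifurcating tree obtained by deleting leaves (pendant-pruning) so that every internal node keeps exactly its non-leaf children, plus leaf children as needed to have exactly two children. Then N(T') = N(T), where N counts labeled histories. -/

import Mathlib

inductive RTree : Type where
  | leaf : RTree
  | node : List RTree → RTree

namespace RTree

def leaves : RTree → ℕ
  | leaf => 1
  | node cs => (cs.attach.map fun c => leaves c.1).sum
decreasing_by simp only [node.sizeOf_spec]; have := List.sizeOf_lt_of_mem c.2; omega

def wcount : RTree → ℕ
  | leaf => 0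
  | node cs => 1 + (cs.attach.map fun c => wcount c.1).sum
decreasing_by simp only [node.sizeOf_spec]; have := List.sizeOf_lt_of_mem c.2; omega

def delta : RTree → ℕ
  | leaf => 0
  | node cs => 1 + (cs.attach.map fun c => delta c.1).foldr max 0
decreasing_by simp only [node.sizeOf_spec]; have := List.sizeOf_lt_of_mem c.2; omega

def prodW : RTree → ℕ
  | leaf => 1
  | node cs =>
      (1 + (cs.attach.map fun c => wcount c.1).sum) * (cs.attach.map fun c => prodW c.1).prod
decreasing_by simp only [node.sizeOf_spec]; have := List.sizeOf_lt_of_mem c.2; omega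

def subtreeAt : List ℕ → RTree → Option RTree
  | [], t => some t
  | _ :: _, leaf => none
  | i :: p, node cs => cs[i]?.bind (fun c => subtreeAt p c)

def Internal (T : RTree) : Type := {p : List ℕ // ∃ cs, subtreeAt p T = some (node cs)}

def IsLabeledHistory (T : RTree) (f : Internal T → Fin (wcount T)) : Prop :=
  Function.Bijective f ∧ ∀ u v : Internal T, v.1 <+: u.1 → v.1 ≠ u.1 → f u < f v

noncomputable def N (T : RTree) : ℕ :=
  Nat.card {f : Internal T → Fin (wcount T) // IsLabeledHistory T f}

def IsTieHistory (T : RTree) (z : ℕ) (f : Internal T → Fin z) : Prop :=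
  Function.Surjective f ∧ ∀ u v : Internal T, v.1 <+: u.1 → v.1 ≠ u.1 → f u < f v

noncomputable def E (T : RTree) (z : ℕ) : ℕ :=
  Nat.card {f : Internal T → Fin z // IsTieHistory T z f}

noncomputable def NTie (T : RTree) : ℕ :=
  Nat.card ((z : ℕ) × {f : Internal T → Fin z // IsTieHistory T z f})

def replaceAt : List ℕ → RTree → RTree → RTree
  | [], _, s => s
  | _ :: _, leaf, _ => leaf
  | i :: p, node cs, s => node (cs.set i (replaceAt p (cs.getD i leaf) s))

end RTree

namespace RTree

/-- `true` iff the tree is not a single leaf. -/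
def nonLeaf : RTree → Bool
  | leaf => false
  | node _ => true

/-- Pendant-pruning: every internal node keeps its (pruned) non-leaf children,
plus leaf children as needed so that it has exactly two children. -/
def prune : RTree → RTree
  | leaf => leaf
  | node cs =>
      node (((cs.attach.filter fun c => nonLeaf c.1).map fun c => prune c.1) ++
        List.replicate (2 - (cs.filter nonLeaf).length) leaf)
decreasing_by simp only [node.sizeOf_spec]; have := List.sizeOf_lt_of_mem c.2; omega

-- basic rewrites
theorem wcount_node (cs : List RTree) : wcount (node cs) = 1 + (cs.map wcount).sum := by
  rw [wcount]; simp

theorem prune_node (cs : List RTree) :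
    prune (node cs) = node ((cs.filter nonLeaf).map prune ++
      List.replicate (2 - (cs.filter nonLeaf).length) leaf) := by
  rw [prune]
  congr 1
  rw [List.filter_attach]; simp

theorem wcount_eq_zero (t : RTree) (h : nonLeaf t = false) : wcount t = 0 := by
  cases t with
  | leaf => rw [wcount]
  | node cs => simp [nonLeaf] at h

theorem sum_filter_wcount (cs : List RTree) :
    ((cs.filter nonLeaf).map wcount).sum = (cs.map wcount).sum := by
  induction cs with
  | nil => rfl
  | cons a cs ih =>
    by_cases h : nonLeaf a
    · simp [List.filter_cons, h, ih]
    · simp only [Bool.not_eq_true] at h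
      simp [List.filter_cons, h, ih, wcount_eq_zero a h]

theorem wcount_prune : ∀ (t : RTree), wcount (prune t) = wcount t := by
  intro t
  induction t using RTree.rec (motive_2 := fun l => ∀ t ∈ l, wcount (prune t) = wcount t) with
  | leaf => rw [prune]
  | node cs ih =>
    rw [prune_node, wcount_node, wcount_node]
    congr 1
    rw [List.map_append, List.sum_append, List.map_map]
    have : (cs.filter nonLeaf).map (wcount ∘ prune) = (cs.filter nonLeaf).map wcount := by
      apply List.map_congr_left
      intro a ha
      exact ih a (List.mem_of_mem_filter ha)
    rw [this, sum_filter_wcount]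
    simp [wcount]
  | nil => simp at *
  | cons a l iha ihl =>
    rcases List.mem_cons.1 (by assumption) with h | h
    · subst h; exact iha
    · exact ihl _ h

/-- index in `cs` of the `i`-th non-leaf child -/
def origIdx : List RTree → ℕ → ℕ
  | [], _ => 0
  | a :: cs, i =>
      if nonLeaf a then (if i = 0 then 0 else origIdx cs (i - 1) + 1)
      else origIdx cs i + 1

theorem lemA : ∀ (cs : List RTree) (i : ℕ), i < (cs.filter nonLeaf).length →
    ∃ c, cs[origIdx cs i]? = some c ∧ (cs.filter nonLeaf)[i]? = some c ∧
      ((cs.take (origIdx cs i)).countP nonLeaf) = i := by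
  intro cs
  induction cs with
  | nil => intro i hi; simp at hi
  | cons a cs ih =>
    intro i hi
    by_cases ha : nonLeaf a
    · rcases Nat.eq_zero_or_pos i with h0 | hpos
      · subst h0
        exact ⟨a, by simp [origIdx, ha], by simp [List.filter_cons, ha], by simp [origIdx, ha]⟩
      · have hi' : i - 1 < (cs.filter nonLeaf).length := by
          simp [List.filter_cons, ha] at hi; omega
        obtain ⟨c, h1, h2, h3⟩ := ih (i - 1) hi'
        refine ⟨c, ?_, ?_, ?_⟩
        · simpa [origIdx, ha, Nat.pos_iff_ne_zero.1 hpos] using h1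
        · rw [List.filter_cons_of_pos ha]
          rw [show i = (i-1) + 1 by omega]
          simpa using h2
        · simp only [origIdx, ha, if_true, Nat.pos_iff_ne_zero.1 hpos, if_false,
            List.take_succ_cons, List.countP_cons, ha]
          omega
    · simp only [Bool.not_eq_true] at ha
      have hi' : i < (cs.filter nonLeaf).length := by
        simpa [List.filter_cons, ha] using hi
      obtain ⟨c, h1, h2, h3⟩ := ih i hi'
      refine ⟨c, ?_, ?_, ?_⟩
      · simpa [origIdx, ha] using h1
      · simpa [List.filter_cons, ha] using h2
      · simp only [origIdx, ha, Bool.false_eq_true, if_false, List.take_succ_cons,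
          List.countP_cons, ha]
        omega

theorem lemB : ∀ (cs : List RTree) (j : ℕ) (c : RTree), cs[j]? = some c → nonLeaf c = true →
    origIdx cs ((cs.take j).countP nonLeaf) = j ∧
      (cs.filter nonLeaf)[(cs.take j).countP nonLeaf]? = some c := by
  intro cs
  induction cs with
  | nil => intro j c h; simp at h
  | cons a cs ih =>
    intro j c hj hc
    cases j with
    | zero =>
      simp only [List.getElem?_cons_zero, Option.some.injEq] at hj
      subst hj
      constructor
      · simp [origIdx, hc]
      · simp [List.filter_cons, hc]
    | succ j =>
      simp only [List.getElem?_cons_succ] at hj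
      obtain ⟨h1, h2⟩ := ih j c hj hc
      by_cases ha : nonLeaf a
      · constructor
        · simp only [List.take_succ_cons, List.countP_cons, ha, if_true, origIdx]
          have : (cs.take j).countP nonLeaf + 1 ≠ 0 := by omega
          simp [this, h1]
        · rw [List.filter_cons_of_pos ha]
          simp only [List.take_succ_cons, List.countP_cons, ha, if_true]
          simpa using h2
      · simp only [Bool.not_eq_true] at ha
        constructor
        · simp only [List.take_succ_cons, List.countP_cons, ha, origIdx, Bool.false_eq_true,
            if_false]
          simp only [Nat.add_zero] at *
          omega
        · rw [List.filter_cons_of_neg (by simp [ha])]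
          simpa [ha] using h2

def toOrig : RTree → List ℕ → List ℕ
  | _, [] => []
  | leaf, _ :: _ => []
  | node cs, i :: p => origIdx cs i :: toOrig (cs.getD (origIdx cs i) leaf) p
termination_by _ p => p.length

def toPruned : RTree → List ℕ → List ℕ
  | _, [] => []
  | leaf, _ :: _ => []
  | node cs, j :: p => ((cs.take j).countP nonLeaf) :: toPruned (cs.getD j leaf) p
termination_by _ p => p.length

-- getting a non-leaf child of prune (node cs)
theorem prune_children_get (cs : List RTree) (i : ℕ) (d : RTree)
    (hget : ((cs.filter nonLeaf).map prune ++
      List.replicate (2 - (cs.filter nonLeaf).length) leaf)[i]? = some d)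
    (hd : nonLeaf d = true) :
    ∃ c, cs[origIdx cs i]? = some c ∧ d = prune c ∧
      ((cs.take (origIdx cs i)).countP nonLeaf) = i := by
  by_cases hi : i < (cs.filter nonLeaf).length
  · obtain ⟨c, h1, h2, h3⟩ := lemA cs i hi
    refine ⟨c, h1, ?_, h3⟩
    rw [List.getElem?_append_left (by simpa using hi)] at hget
    rw [List.getElem?_map, h2] at hget
    simpa using hget.symm
  · exfalso
    rw [List.getElem?_append_right (by simpa using hi)] at hget
    have := List.mem_of_getElem? hget
    have := List.eq_of_mem_replicate this
    subst this
    simp [nonLeaf] at hd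

theorem nonLeaf_of_subtree (p : List ℕ) (t : RTree) (cs : List RTree)
    (h : subtreeAt p t = some (node cs)) : nonLeaf t = true := by
  cases t with
  | leaf =>
    cases p with
    | nil => simp [subtreeAt] at h
    | cons i p => simp [subtreeAt] at h
  | node _ => rfl

-- validity forward
theorem valid_toOrig : ∀ (p : List ℕ) (t : RTree) (ds : List RTree),
    subtreeAt p (prune t) = some (node ds) →
    ∃ cs, subtreeAt (toOrig t p) t = some (node cs) := by
  intro p
  induction p with
  | nil =>
    intro t ds h
    cases t with
    | leaf => rw [prune] at h; simp [subtreeAt] at h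
    | node cs => exact ⟨cs, by simp [toOrig, subtreeAt]⟩
  | cons i p ih =>
    intro t ds h
    cases t with
    | leaf => rw [prune] at h; simp [subtreeAt] at h
    | node cs =>
      rw [prune_node] at h
      simp only [subtreeAt, Option.bind_eq_some_iff] at h
      obtain ⟨d, hget, hsub⟩ := h
      have hd : nonLeaf d = true := nonLeaf_of_subtree p d ds hsub
      obtain ⟨c, hc1, hc2, hc3⟩ := prune_children_get cs i d hget hd
      subst hc2
      obtain ⟨cs2, hcs2⟩ := ih c ds hsub
      refine ⟨cs2, ?_⟩
      rw [show toOrig (node cs) (i :: p) =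
        origIdx cs i :: toOrig (cs.getD (origIdx cs i) leaf) p from by rw [toOrig]]
      have hgetD : cs.getD (origIdx cs i) leaf = c := by
        rw [List.getD_eq_getElem?_getD, hc1]; rfl
      rw [hgetD]
      simp only [subtreeAt, hc1, Option.bind_some]
      exact hcs2

-- validity backward
theorem valid_toPruned : ∀ (p : List ℕ) (t : RTree) (cs : List RTree),
    subtreeAt p t = some (node cs) →
    ∃ ds, subtreeAt (toPruned t p) (prune t) = some (node ds) := by
  intro p
  induction p with
  | nil =>
    intro t cs h
    simp only [subtreeAt, Option.some.injEq] at h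
    subst h
    rw [prune_node]
    exact ⟨_, by rw [show toPruned _ [] = [] from by rw [toPruned]]; rfl⟩
  | cons j p ih =>
    intro t cs h
    cases t with
    | leaf => simp [subtreeAt] at h
    | node cs0 =>
      simp only [subtreeAt, Option.bind_eq_some_iff] at h
      obtain ⟨c, hget, hsub⟩ := h
      have hc : nonLeaf c = true := nonLeaf_of_subtree p c cs hsub
      obtain ⟨h1, h2⟩ := lemB cs0 j c hget hc
      obtain ⟨ds, hds⟩ := ih c cs hsub
      refine ⟨ds, ?_⟩
      rw [show toPruned (node cs0) (j :: p) =
        ((cs0.take j).countP nonLeaf) :: toPruned (cs0.getD j leaf) p from by rw [toPruned]]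
      have hgetD : cs0.getD j leaf = c := by rw [List.getD_eq_getElem?_getD, hget]; rfl
      rw [hgetD, prune_node]
      simp only [subtreeAt]
      have hlen : (cs0.take j).countP nonLeaf < (cs0.filter nonLeaf).length :=
        List.getElem?_eq_some_iff.1 h2 |>.1 |> (by simpa using ·)
      rw [List.getElem?_append_left (by simpa using hlen), List.getElem?_map, h2]
      simpa using hds

theorem roundtrip1 : ∀ (p : List ℕ) (t : RTree) (cs : List RTree),
    subtreeAt p t = some (node cs) → toOrig t (toPruned t p) = p := by
  intro p
  induction p with
  | nil => intro t cs h; rw [show toPruned t [] = [] from by rw [toPruned]]; rw [toOrig]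
  | cons j p ih =>
    intro t cs h
    cases t with
    | leaf => simp [subtreeAt] at h
    | node cs0 =>
      simp only [subtreeAt, Option.bind_eq_some_iff] at h
      obtain ⟨c, hget, hsub⟩ := h
      have hc : nonLeaf c = true := nonLeaf_of_subtree p c cs hsub
      obtain ⟨h1, h2⟩ := lemB cs0 j c hget hc
      have hgetD : cs0.getD j leaf = c := by rw [List.getD_eq_getElem?_getD, hget]; rfl
      rw [show toPruned (node cs0) (j :: p) =
        ((cs0.take j).countP nonLeaf) :: toPruned (cs0.getD j leaf) p from by rw [toPruned]]
      rw [toOrig, h1, hgetD, ih c cs hsub]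

theorem roundtrip2 : ∀ (p : List ℕ) (t : RTree) (ds : List RTree),
    subtreeAt p (prune t) = some (node ds) → toPruned t (toOrig t p) = p := by
  intro p
  induction p with
  | nil => intro t ds h; rw [show toOrig t [] = [] from by rw [toOrig]]; rw [toPruned]
  | cons i p ih =>
    intro t ds h
    cases t with
    | leaf => rw [prune] at h; simp [subtreeAt] at h
    | node cs =>
      rw [prune_node] at h
      simp only [subtreeAt, Option.bind_eq_some_iff] at h
      obtain ⟨d, hget, hsub⟩ := h
      have hd : nonLeaf d = true := nonLeaf_of_subtree p d ds hsub
      obtain ⟨c, hc1, hc2, hc3⟩ := prune_children_get cs i d hget hd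
      subst hc2
      have hgetD : cs.getD (origIdx cs i) leaf = c := by rw [List.getD_eq_getElem?_getD, hc1]; rfl
      rw [show toOrig (node cs) (i :: p) =
        origIdx cs i :: toOrig (cs.getD (origIdx cs i) leaf) p from by rw [toOrig]]
      rw [toPruned, hc3, hgetD, ih c ds hsub]

theorem toOrig_prefix : ∀ (q p : List ℕ) (t : RTree), q <+: p → toOrig t q <+: toOrig t p := by
  intro q
  induction q with
  | nil => intro p t _; rw [show toOrig t [] = [] from by rw [toOrig]]; exact List.nil_prefix
  | cons i q ih =>
    intro p t hq
    obtain ⟨r, hr⟩ := hq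
    subst hr
    simp only [List.cons_append]
    cases t with
    | leaf =>
      rw [show toOrig leaf (i :: q) = [] from by rw [toOrig],
        show toOrig leaf (i :: (q ++ r)) = [] from by rw [toOrig]]
    | node cs =>
      rw [show toOrig (node cs) (i :: q) =
        origIdx cs i :: toOrig (cs.getD (origIdx cs i) leaf) q from by rw [toOrig]]
      rw [show toOrig (node cs) (i :: (q ++ r)) =
        origIdx cs i :: toOrig (cs.getD (origIdx cs i) leaf) (q ++ r) from by rw [toOrig]]
      exact List.cons_prefix_cons.2 ⟨rfl, ih _ _ (List.prefix_append q r)⟩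

theorem toPruned_prefix : ∀ (q p : List ℕ) (t : RTree), q <+: p →
    toPruned t q <+: toPruned t p := by
  intro q
  induction q with
  | nil => intro p t _; rw [show toPruned t [] = [] from by rw [toPruned]]; exact List.nil_prefix
  | cons j q ih =>
    intro p t hq
    obtain ⟨r, hr⟩ := hq
    subst hr
    simp only [List.cons_append]
    cases t with
    | leaf =>
      rw [show toPruned leaf (j :: q) = [] from by rw [toPruned],
        show toPruned leaf (j :: (q ++ r)) = [] from by rw [toPruned]]
    | node cs =>
      rw [show toPruned (node cs) (j :: q) =
        ((cs.take j).countP nonLeaf) :: toPruned (cs.getD j leaf) q from by rw [toPruned]]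
      rw [show toPruned (node cs) (j :: (q ++ r)) =
        ((cs.take j).countP nonLeaf) :: toPruned (cs.getD j leaf) (q ++ r) from by rw [toPruned]]
      exact List.cons_prefix_cons.2 ⟨rfl, ih _ _ (List.prefix_append q r)⟩

def pruneEquiv (T : RTree) : Internal (prune T) ≃ Internal T where
  toFun u := ⟨toOrig T u.1, by obtain ⟨ds, hds⟩ := u.2; exact valid_toOrig u.1 T ds hds⟩
  invFun v := ⟨toPruned T v.1, by obtain ⟨cs, hcs⟩ := v.2; exact valid_toPruned v.1 T cs hcs⟩
  left_inv u := by
    obtain ⟨ds, hds⟩ := u.2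
    exact Subtype.ext (roundtrip2 u.1 T ds hds)
  right_inv v := by
    obtain ⟨cs, hcs⟩ := v.2
    exact Subtype.ext (roundtrip1 v.1 T cs hcs)

theorem N_prune_eq' (T : RTree) : N (prune T) = N T := by
  have hw : wcount (prune T) = wcount T := wcount_prune T
  apply Nat.card_congr
  refine Equiv.subtypeEquiv (Equiv.arrowCongr (pruneEquiv T) (finCongr hw)) ?_
  intro f
  have happ : ∀ v : Internal T, (Equiv.arrowCongr (pruneEquiv T) (finCongr hw)) f v
      = finCongr hw (f ((pruneEquiv T).symm v)) := fun v => rfl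
  constructor
  · rintro ⟨hbij, hord⟩
    refine ⟨?_, ?_⟩
    · have h0 : ((Equiv.arrowCongr (pruneEquiv T) (finCongr hw)) f)
          = ⇑(finCongr hw) ∘ f ∘ ⇑(pruneEquiv T).symm := rfl
      rw [h0]
      exact (finCongr hw).bijective.comp (hbij.comp (pruneEquiv T).symm.bijective)
    · intro u v hpre hne
      rw [happ, happ]
      have h1 : ((pruneEquiv T).symm v).1 <+: ((pruneEquiv T).symm u).1 :=
        toPruned_prefix _ _ T hpre
      have h2 : ((pruneEquiv T).symm v).1 ≠ ((pruneEquiv T).symm u).1 := by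
        intro h
        exact hne (congrArg Subtype.val ((pruneEquiv T).symm.injective (Subtype.ext h)))
      have h3 := hord _ _ h1 h2
      exact h3
  · rintro ⟨hbij, hord⟩
    have hbij' : Function.Bijective (⇑(finCongr hw) ∘ f ∘ ⇑(pruneEquiv T).symm) := hbij
    refine ⟨?_, ?_⟩
    · have h0 : f = ⇑(finCongr hw).symm ∘
          (⇑(finCongr hw) ∘ f ∘ ⇑(pruneEquiv T).symm) ∘ ⇑(pruneEquiv T) := by
        funext u
        simp only [Function.comp_apply, Equiv.symm_apply_apply]
      rw [h0]
      exact (finCongr hw).symm.bijective.comp (hbij'.comp (pruneEquiv T).bijective)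
    · intro u v hpre hne
      have h1 : ((pruneEquiv T) v).1 <+: ((pruneEquiv T) u).1 := toOrig_prefix _ _ T hpre
      have h2 : ((pruneEquiv T) v).1 ≠ ((pruneEquiv T) u).1 := by
        intro h
        exact hne (congrArg Subtype.val ((pruneEquiv T).injective (Subtype.ext h)))
      have h3 := hord _ _ h1 h2
      rw [happ, happ, Equiv.symm_apply_apply, Equiv.symm_apply_apply] at h3
      exact h3

/-- if every internal node of `T` has at most two non-leaf children
(`T` is bifurcatable), then the strictly bifurcating tree obtained by
pendant-pruning has the same number of labeled histories as `T`. -/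
theorem N_prune_eq (T : RTree)
    (hbif : ∀ (p : List ℕ) (cs : List RTree),
      subtreeAt p T = some (node cs) → (cs.filter nonLeaf).length ≤ 2) :
    N (prune T) = N T := N_prune_eq' T

end RTree
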